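/- Let d ≥ 1, let h : {−1,1}^d → ℝ satisfy 0 ≤ h(y) ≤ d for all y, and let M ≥ 2d. Define f : ℝ^d → ℝ by f(x) = min(M, h(round(x)) + 2M·g(x)). Then f is continuous on ℝ^d and is 2M-Lipschitz: |f(x) − f(x')| ≤ 2M‖x − x'‖ for all x, x' ∈ ℝ^d. -/

import Mathlib

open Real MeasureTheory

/-- The coordinatewise sign vector: `round(x)_i = 1` if `x_i ≥ 0` and `-1` otherwise. -/
noncomputable def rnd {d : ℕ} (x : EuclideanSpace ℝ (Fin d)) : EuclideanSpace ℝ (Fin d) :=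
  WithLp.toLp 2 (fun i => if 0 ≤ x i then (1 : ℝ) else -1)

/-- The continuous extension `f(x) = min(M, h(round x) + 2M·‖x - round x‖)` of a
function `h` on the hypercube vertices. -/
noncomputable def fExt {d : ℕ} (h : EuclideanSpace ℝ (Fin d) → ℝ) (M : ℝ)
    (x : EuclideanSpace ℝ (Fin d)) : ℝ :=
  min M (h (rnd x) + 2 * M * ‖x - rnd x‖)

lemma abs_coord_le_norm {d : ℕ} (v : EuclideanSpace ℝ (Fin d)) (i : Fin d) : |v i| ≤ ‖v‖ := by
  rw [EuclideanSpace.norm_eq]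
  have h1 : |v i| = Real.sqrt (‖v i‖ ^ 2) := by
    rw [Real.sqrt_sq_eq_abs]; simp [Real.norm_eq_abs]
  rw [h1]
  apply Real.sqrt_le_sqrt
  exact Finset.single_le_sum (f := fun j => ‖v j‖ ^ 2) (fun j _ => by positivity)
    (Finset.mem_univ i)

lemma rnd_vertex {d : ℕ} (x : EuclideanSpace ℝ (Fin d)) : ∀ i, rnd x i = 1 ∨ rnd x i = -1 := by
  intro i
  unfold rnd
  simp only [WithLp.ofLp_toLp]
  split <;> simp

/-- If `0 ≤ h ≤ d` on the hypercube vertices and `M ≥ 2d`, then the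
extension `f(x) = min(M, h(round x) + 2M·g(x))` is continuous and `2M`-Lipschitz. -/
theorem extension_continuous_lipschitz (d : ℕ) (hd : 1 ≤ d)
    (h : EuclideanSpace ℝ (Fin d) → ℝ)
    (hh : ∀ y : EuclideanSpace ℝ (Fin d), (∀ i, y i = 1 ∨ y i = -1) →
      0 ≤ h y ∧ h y ≤ (d : ℝ))
    (M : ℝ) (hM : 2 * (d : ℝ) ≤ M) :
    Continuous (fExt h M) ∧
    ∀ x x' : EuclideanSpace ℝ (Fin d), |fExt h M x - fExt h M x'| ≤ 2 * M * ‖x - x'‖ := by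
  have hd1 : (1:ℝ) ≤ (d:ℝ) := by exact_mod_cast hd
  have hM0 : (0:ℝ) ≤ M := by linarith
  have key : ∀ x x' : EuclideanSpace ℝ (Fin d),
      fExt h M x - fExt h M x' ≤ 2 * M * ‖x - x'‖ := by
    intro x x'
    have ht0 : (0:ℝ) ≤ ‖x - x'‖ := norm_nonneg _
    by_cases hr : rnd x = rnd x'
    · -- same vertex
      have h1 : ‖x - rnd x'‖ ≤ ‖x' - rnd x'‖ + ‖x - x'‖ := by
        calc ‖x - rnd x'‖ = ‖(x - x') + (x' - rnd x')‖ := by rw [sub_add_sub_cancel]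
          _ ≤ ‖x - x'‖ + ‖x' - rnd x'‖ := norm_add_le _ _
          _ = ‖x' - rnd x'‖ + ‖x - x'‖ := by ring
      unfold fExt
      rw [hr]
      set c := h (rnd x') with hc
      set a := ‖x - rnd x'‖
      set b := ‖x' - rnd x'‖
      rcases le_total (c + 2 * M * b) M with hcb | hcb
      · rw [min_eq_right hcb]
        have := min_le_right M (c + 2 * M * a)
        nlinarith
      · rw [min_eq_left hcb]
        have := min_le_left M (c + 2 * M * a)
        nlinarith
    · -- different vertices
      obtain ⟨i, hi⟩ : ∃ i, rnd x i ≠ rnd x' i := by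
        by_contra hcon
        push_neg at hcon
        exact hr (WithLp.ofLp_injective 2 (funext hcon))
      have hxi : |x' i - rnd x' i| ≤ ‖x' - rnd x'‖ := abs_coord_le_norm (x' - rnd x') i
      have hxx : |x i - x' i| ≤ ‖x - x'‖ := abs_coord_le_norm (x - x') i
      have hone : (1:ℝ) ≤ ‖x' - rnd x'‖ + ‖x - x'‖ := by
        have e1 : rnd x i = if 0 ≤ x i then 1 else -1 := rfl
        have e2 : rnd x' i = if 0 ≤ x' i then 1 else -1 := rfl
        by_cases h1 : 0 ≤ x i <;> by_cases h2 : 0 ≤ x' i <;>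
          rw [e1, e2] at hi <;> simp [h1, h2] at hi <;> rw [e2] at hxi <;>
          simp only [h2, if_true, if_false] at hxi
        · -- x i ≥ 0, x' i < 0
          have hA := le_abs_self (x' i - (-1))
          have hB := le_abs_self (x i - x' i)
          push_neg at h2
          linarith
        · -- x i < 0, x' i ≥ 0
          have hA := neg_abs_le (x' i - 1)
          have hB := neg_abs_le (x i - x' i)
          push_neg at h1
          linarith
      have hfx : fExt h M x ≤ M := min_le_left _ _
      have hy' : 0 ≤ h (rnd x') := (hh (rnd x') (rnd_vertex x')).1
      have hfx' : min M (2 * M * ‖x' - rnd x'‖) ≤ fExt h M x' := by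
        unfold fExt
        apply le_min (min_le_left _ _)
        have := min_le_right M (2 * M * ‖x' - rnd x'‖)
        linarith
      rcases le_total M (2 * M * ‖x' - rnd x'‖) with hc | hc
      · rw [min_eq_left hc] at hfx'
        nlinarith
      · rw [min_eq_right hc] at hfx'
        nlinarith
  have habs : ∀ x x' : EuclideanSpace ℝ (Fin d),
      |fExt h M x - fExt h M x'| ≤ 2 * M * ‖x - x'‖ := by
    intro x x'
    rw [abs_sub_le_iff]
    refine ⟨key x x', ?_⟩
    rw [norm_sub_rev]
    exact key x' x
  refine ⟨?_, habs⟩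
  have hlip : LipschitzWith (Real.toNNReal (2 * M)) (fExt h M) := by
    apply LipschitzWith.of_dist_le_mul
    intro x x'
    rw [Real.dist_eq, dist_eq_norm, Real.coe_toNNReal _ (by linarith)]
    exact habs x x'
  exact hlip.continuous
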